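/- Let α ≥ 0 and β > −1 be real numbers and let k ≥ 2 be an integer. If t satisfies x* < t < 1, where x* is the largest zero in (−1,1) of the Jacobi polynomial P_{k−1}^{(α+1,β+1)}, then the finite sequence P̂_0^{(α,β)}(t), P̂_1^{(α,β)}(t), …, P̂_k^{(α,β)}(t) is strictly decreasing; that is, P̂_j^{(α,β)}(t) > P̂_{j+1}^{(α,β)}(t) for j = 0, 1, …, k−1. -/

import Mathlib

/-- Generalized binomial coefficient `C(a, j) = a(a-1)⋯(a-j+1)/j!` for real `a`. -/
noncomputable def genBinom (a : ℝ) (j : ℕ) : ℝ :=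
  (∏ i ∈ Finset.range j, (a - i)) / (Nat.factorial j)

/-- The Jacobi polynomial
`P_k^{(α,β)}(x) = Σ_{m=0}^k C(k+α, k-m)·C(k+β, m)·((x-1)/2)^m·((x+1)/2)^{k-m}`. -/
noncomputable def jacobiP (α β : ℝ) (k : ℕ) (x : ℝ) : ℝ :=
  ∑ m ∈ Finset.range (k + 1),
    genBinom ((k : ℝ) + α) (k - m) * genBinom ((k : ℝ) + β) m *
      ((x - 1) / 2) ^ m * ((x + 1) / 2) ^ (k - m)

/-- The normalized Jacobi polynomial `P̂_k^{(α,β)} = P_k^{(α,β)} / C(k+α, k)`,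
so that `P̂_k^{(α,β)}(1) = 1`. -/
noncomputable def jacobiPN (α β : ℝ) (k : ℕ) (x : ℝ) : ℝ :=
  jacobiP α β k x / genBinom ((k : ℝ) + α) k

lemma genBinom_zero (x : ℝ) : genBinom x 0 = 1 := by simp [genBinom]

lemma genBinom_succ (x : ℝ) (j : ℕ) :
    genBinom x (j+1) = (x - j)/(j+1) * genBinom x j := by
  unfold genBinom
  rw [Finset.prod_range_succ, Nat.factorial_succ]
  have h2 : ((j.factorial : ℝ)) ≠ 0 := Nat.cast_ne_zero.mpr j.factorial_ne_zero
  have h1 : ((j:ℝ)+1) ≠ 0 := by positivity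
  push_cast
  field_simp


lemma genBinom_succ_top (x : ℝ) (j : ℕ) :
    genBinom (x+1) (j+1) = (x+1)/(j+1) * genBinom x j := by
  unfold genBinom
  rw [Finset.prod_range_succ', Nat.factorial_succ]
  have h2 : ((j.factorial : ℝ)) ≠ 0 := Nat.cast_ne_zero.mpr j.factorial_ne_zero
  have h1 : ((j:ℝ)+1) ≠ 0 := by positivity
  have h3 : ∀ i ∈ Finset.range j, (x + 1 - ((i+1 : ℕ):ℝ)) = x - i := by
    intro i _; push_cast; ring
  rw [Finset.prod_congr rfl h3]
  push_cast
  field_simp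
  ring

lemma genBinom_pos {a : ℝ} (h : -1 < a) (n : ℕ) : 0 < genBinom ((n:ℝ) + a) n := by
  unfold genBinom
  apply div_pos
  · apply Finset.prod_pos
    intro i hi
    have : (i:ℝ) ≤ (n:ℝ) - 1 := by
      have := Finset.mem_range.mp hi
      have : (i:ℝ) + 1 ≤ (n:ℝ) := by exact_mod_cast this
      linarith
    linarith
  · exact_mod_cast Nat.cast_pos.mpr n.factorial_pos

lemma shapeV (n : ℕ) (t : ℕ → ℝ) (u v : ℝ) :
    (∑ m ∈ Finset.range (n+1), t m * u^m * v^(n-m)) * v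
      = ∑ m ∈ Finset.range (n+2), (if m = n+1 then 0 else t m) * u^m * v^(n+1-m) := by
  conv_rhs => rw [Finset.sum_range_succ]
  rw [if_pos rfl]
  simp only [zero_mul, add_zero]
  rw [Finset.sum_mul]
  apply Finset.sum_congr rfl
  intro m hm
  have hm' : m ≤ n := Nat.lt_succ_iff.mp (Finset.mem_range.mp hm)
  rw [if_neg (by omega), show n+1-m = (n-m)+1 from by omega, pow_succ]
  ring

lemma shapeU (n : ℕ) (t : ℕ → ℝ) (u v : ℝ) :
    (∑ m ∈ Finset.range (n+1), t m * u^m * v^(n-m)) * u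
      = ∑ m ∈ Finset.range (n+2), (if m = 0 then 0 else t (m-1)) * u^m * v^(n+1-m) := by
  conv_rhs => rw [Finset.sum_range_succ']
  rw [if_pos rfl]
  simp only [zero_mul, add_zero]
  rw [Finset.sum_mul]
  apply Finset.sum_congr rfl
  intro m hm
  have : ¬ (m + 1 = 0) := by omega
  rw [if_neg this]
  simp only [Nat.add_sub_cancel, Nat.succ_sub_succ, Nat.sub_zero]
  rw [pow_succ]
  ring

lemma jacobiP_zero_eq (a b : ℝ) (x : ℝ) : jacobiP a b 0 x = 1 := by
  simp [jacobiP, genBinom_zero]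

lemma jacobiP_one_eq (a b : ℝ) (x : ℝ) :
    jacobiP a b 1 x = (1+a)*((x+1)/2) + (1+b)*((x-1)/2) := by
  rw [jacobiP]
  rw [Finset.sum_range_succ, Finset.sum_range_one]
  norm_num [genBinom_zero, genBinom]

lemma jacobiP_at_one (a b : ℝ) (n : ℕ) : jacobiP a b n 1 = genBinom ((n:ℝ)+a) n := by
  rw [jacobiP]
  rw [Finset.sum_eq_single 0]
  · norm_num [genBinom_zero]
  · intro m _ hm
    have : ((1:ℝ)-1)/2 = 0 := by norm_num
    rw [this, zero_pow hm]
    ring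
  · intro h; simp at h

lemma jacobiP_I1 (a b : ℝ) (n : ℕ) (x : ℝ) :
    ((n:ℝ)+a+1) * jacobiP a b n x - ((n:ℝ)+1) * jacobiP a b (n+1) x
      = (2*(n:ℝ)+a+b+2) * ((1-x)/2) * jacobiP (a+1) b n x := by
  have e1 := shapeV n (fun m => genBinom ((n:ℝ)+a) (n-m) * genBinom ((n:ℝ)+b) m)
      ((x-1)/2) ((x+1)/2)
  have e2 := shapeU n (fun m => genBinom ((n:ℝ)+a) (n-m) * genBinom ((n:ℝ)+b) m)
      ((x-1)/2) ((x+1)/2)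
  have e3 := shapeU n (fun m => genBinom ((n:ℝ)+(a+1)) (n-m) * genBinom ((n:ℝ)+b) m)
      ((x-1)/2) ((x+1)/2)
  try simp only [] at e1 e2 e3
  have key : ((n:ℝ)+a+1) * (jacobiP a b n x * ((x+1)/2))
      - ((n:ℝ)+a+1) * (jacobiP a b n x * ((x-1)/2))
      - ((n:ℝ)+1) * jacobiP a b (n+1) x
      + (2*(n:ℝ)+a+b+2) * (jacobiP (a+1) b n x * ((x-1)/2)) = 0 := by
    simp only [jacobiP]
    rw [e1, e2, e3]
    rw [Finset.mul_sum, Finset.mul_sum, Finset.mul_sum, Finset.mul_sum]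
    rw [← Finset.sum_sub_distrib, ← Finset.sum_sub_distrib, ← Finset.sum_add_distrib]
    apply Finset.sum_eq_zero
    intro m hm
    have hmn : m ≤ n + 1 := Nat.lt_succ_iff.mp (Finset.mem_range.mp hm)
    rcases Nat.eq_zero_or_pos m with rfl | hmpos
    · -- m = 0
      rw [if_neg (by omega : ¬ (0 = n+1)), if_pos rfl, if_pos rfl]
      simp only [Nat.sub_zero, genBinom_zero, pow_zero, Nat.cast_add, Nat.cast_one]
      rw [show ((n:ℝ))+1+a = ((n:ℝ)+a)+1 from by ring, genBinom_succ_top]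
      have h1 : ((n:ℝ)+1) ≠ 0 := by positivity
      field_simp
      ring
    · obtain ⟨m', rfl⟩ : ∃ m', m = m'+1 := ⟨m-1, by omega⟩
      simp only [Nat.add_sub_cancel]
      by_cases hm'n : m' = n
      · subst hm'n
        rw [if_pos rfl, if_neg (by omega : ¬ (m'+1 = 0)), if_neg (by omega : ¬ (m'+1 = 0))]
        simp only [Nat.sub_self, Nat.add_sub_cancel_left, genBinom_zero,
          Nat.cast_add, Nat.cast_one, Nat.add_sub_cancel]
        rw [show ((m':ℝ))+1+b = ((m':ℝ)+b)+1 from by ring, genBinom_succ_top]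
        have h1 : ((m':ℝ)+1) ≠ 0 := by positivity
        field_simp
        ring
      · obtain ⟨d, rfl⟩ : ∃ d, n = m'+1+d := ⟨n-(m'+1), by omega⟩
        rw [if_neg (by omega : ¬ (m'+1 = m'+1+d+1)), if_neg (by omega : ¬ (m'+1 = 0)),
          if_neg (by omega : ¬ (m'+1 = 0))]
        rw [show m'+1+d - (m'+1) = d from by omega, show m'+1+d - m' = d+1 from by omega,
          show m'+1+d+1 - (m'+1) = d+1 from by omega]
        simp only [Nat.cast_add, Nat.cast_one]
        rw [show ((m':ℝ))+1+(d:ℝ)+1+a = (((m':ℝ))+1+(d:ℝ)+a)+1 from by ring,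
          show ((m':ℝ))+1+(d:ℝ)+(a+1) = (((m':ℝ))+1+(d:ℝ)+a)+1 from by ring,
          show ((m':ℝ))+1+(d:ℝ)+1+b = (((m':ℝ))+1+(d:ℝ)+b)+1 from by ring]
        rw [genBinom_succ_top, genBinom_succ_top, genBinom_succ, genBinom_succ]
        have h1 : ((d:ℝ)+1) ≠ 0 := by positivity
        have h2 : ((m':ℝ)+1) ≠ 0 := by positivity
        field_simp
        ring
  linear_combination key

lemma jacobiP_M2 (a b : ℝ) (n : ℕ) (x : ℝ) :
    (2*((n:ℝ)+1)+a+b+1) * jacobiP a b (n+1) x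
      = ((n:ℝ)+1+a+b+1) * jacobiP a (b+1) (n+1) x + ((n:ℝ)+1+a) * jacobiP a (b+1) n x := by
  have e1 := shapeV n (fun m => genBinom ((n:ℝ)+a) (n-m) * genBinom ((n:ℝ)+(b+1)) m)
      ((x-1)/2) ((x+1)/2)
  have e2 := shapeU n (fun m => genBinom ((n:ℝ)+a) (n-m) * genBinom ((n:ℝ)+(b+1)) m)
      ((x-1)/2) ((x+1)/2)
  try simp only [] at e1 e2
  have key : (2*((n:ℝ)+1)+a+b+1) * jacobiP a b (n+1) x
      - ((n:ℝ)+1+a+b+1) * jacobiP a (b+1) (n+1) x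
      - ((n:ℝ)+1+a) * (jacobiP a (b+1) n x * ((x+1)/2))
      + ((n:ℝ)+1+a) * (jacobiP a (b+1) n x * ((x-1)/2)) = 0 := by
    simp only [jacobiP]
    rw [e1, e2]
    rw [Finset.mul_sum, Finset.mul_sum, Finset.mul_sum, Finset.mul_sum]
    rw [← Finset.sum_sub_distrib, ← Finset.sum_sub_distrib, ← Finset.sum_add_distrib]
    apply Finset.sum_eq_zero
    intro m hm
    have hmn : m ≤ n + 1 := Nat.lt_succ_iff.mp (Finset.mem_range.mp hm)
    rcases Nat.eq_zero_or_pos m with rfl | hmpos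
    · -- m = 0
      rw [if_neg (by omega : ¬ (0 = n+1)), if_pos rfl]
      simp only [Nat.sub_zero, genBinom_zero, pow_zero, Nat.cast_add, Nat.cast_one]
      rw [show ((n:ℝ))+1+a = ((n:ℝ)+a)+1 from by ring, genBinom_succ_top]
      have h1 : ((n:ℝ)+1) ≠ 0 := by positivity
      field_simp
      ring
    · obtain ⟨m', rfl⟩ : ∃ m', m = m'+1 := ⟨m-1, by omega⟩
      simp only [Nat.add_sub_cancel]
      by_cases hm'n : m' = n
      · subst hm'n
        rw [if_pos rfl, if_neg (by omega : ¬ (m'+1 = 0))]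
        simp only [Nat.sub_self, Nat.add_sub_cancel_left, genBinom_zero,
          Nat.cast_add, Nat.cast_one, Nat.add_sub_cancel]
        rw [show ((m':ℝ))+1+b = ((m':ℝ)+b+1) from by ring,
          show ((m':ℝ))+(b+1) = ((m':ℝ)+b+1) from by ring,
          show ((m':ℝ))+1+(b+1) = ((m':ℝ)+b+1)+1 from by ring,
          genBinom_succ_top ((m':ℝ)+b+1) m', genBinom_succ ((m':ℝ)+b+1) m']
        have h1 : ((m':ℝ)+1) ≠ 0 := by positivity
        field_simp
        ring
      · obtain ⟨d, rfl⟩ : ∃ d, n = m'+1+d := ⟨n-(m'+1), by omega⟩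
        rw [if_neg (by omega : ¬ (m'+1 = m'+1+d+1)), if_neg (by omega : ¬ (m'+1 = 0))]
        rw [show m'+1+d - (m'+1) = d from by omega, show m'+1+d - m' = d+1 from by omega,
          show m'+1+d+1 - (m'+1) = d+1 from by omega]
        simp only [Nat.cast_add, Nat.cast_one]
        rw [show ((m':ℝ))+1+(d:ℝ)+1+a = (((m':ℝ))+1+(d:ℝ)+a)+1 from by ring,
          show ((m':ℝ))+1+(d:ℝ)+1+(b+1) = (((m':ℝ))+1+(d:ℝ)+b+1)+1 from by ring,
          show ((m':ℝ))+1+(d:ℝ)+(b+1) = (((m':ℝ))+1+(d:ℝ)+b+1) from by ring,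
          show ((m':ℝ))+1+(d:ℝ)+1+b = (((m':ℝ))+1+(d:ℝ)+b+1) from by ring]
        rw [genBinom_succ_top ((m':ℝ)+1+(d:ℝ)+a) d, genBinom_succ_top ((m':ℝ)+1+(d:ℝ)+b+1) m',
          genBinom_succ ((m':ℝ)+1+(d:ℝ)+a) d, genBinom_succ ((m':ℝ)+1+(d:ℝ)+b+1) m']
        have h1 : ((d:ℝ)+1) ≠ 0 := by positivity
        have h2 : ((m':ℝ)+1) ≠ 0 := by positivity
        field_simp
        ring
  linear_combination key

lemma jacobiP_reflect (a b : ℝ) (n : ℕ) (x : ℝ) :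
    jacobiP a b n x = (-1)^n * jacobiP b a n (-x) := by
  rw [jacobiP, jacobiP, Finset.mul_sum]
  rw [← Finset.sum_range_reflect]
  apply Finset.sum_congr rfl
  intro m hm
  have hmn : m ≤ n := Nat.lt_succ_iff.mp (Finset.mem_range.mp hm)
  rw [show n + 1 - 1 - m = n - m from by omega, show n - (n - m) = m from by omega]
  have h1 : ((-x - 1)/2 : ℝ) = -((x+1)/2) := by ring
  have h2 : ((-x + 1)/2 : ℝ) = -((x-1)/2) := by ring
  rw [h1, h2, neg_pow ((x+1)/2), neg_pow ((x-1)/2)]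
  have h3 : ((-1:ℝ))^n = ((-1:ℝ))^m * ((-1:ℝ))^(n-m) := by
    rw [← pow_add, show m + (n - m) = n from by omega]
  rw [h3]
  have h4 : ((-1:ℝ))^m * ((-1:ℝ))^m = 1 := by
    rw [← pow_add]; exact Even.neg_one_pow ⟨m, rfl⟩
  have h5 : ((-1:ℝ))^(n-m) * ((-1:ℝ))^(n-m) = 1 := by
    rw [← pow_add]; exact Even.neg_one_pow ⟨n-m, rfl⟩
  linear_combination (-(genBinom ((n:ℝ)+a) m * genBinom ((n:ℝ)+b) (n-m) * ((x-1)/2)^(n-m) *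
      ((x+1)/2)^m * ((-1:ℝ))^(n-m) * ((-1:ℝ))^(n-m))) * h4
    - (genBinom ((n:ℝ)+a) m * genBinom ((n:ℝ)+b) (n-m) * ((x-1)/2)^(n-m) * ((x+1)/2)^m) * h5

lemma jacobiP_M2' (a b : ℝ) (n : ℕ) (x : ℝ) :
    (2*((n:ℝ)+1)+a+b+1) * jacobiP a b (n+1) x
      = ((n:ℝ)+1+a+b+1) * jacobiP (a+1) b (n+1) x - ((n:ℝ)+1+b) * jacobiP (a+1) b n x := by
  have h := jacobiP_M2 b a n (-x)
  have e1 := jacobiP_reflect a b (n+1) x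
  have e2 := jacobiP_reflect (a+1) b (n+1) x
  have e3 := jacobiP_reflect (a+1) b n x
  rw [e1, e2, e3]
  simp only [pow_succ]
  linear_combination (-((-1:ℝ))^n) * h

lemma jacobiP_rec (a b : ℝ) (n : ℕ) (x : ℝ) :
    (((n:ℝ)+2)*((n:ℝ)+a+b+2)*(2*((n:ℝ)+1)+a+b)) * jacobiP a b (n+2) x
      = ((2*((n:ℝ)+1)+a+b)*(2*((n:ℝ)+1)+a+b+1)*(2*((n:ℝ)+1)+a+b+2)*((x-1)/2)
         + (((n:ℝ)+a+2)*((n:ℝ)+a+b+2)*(2*((n:ℝ)+1)+a+b)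
            + ((n:ℝ)+1)*((n:ℝ)+1+b)*(2*((n:ℝ)+1)+a+b+2)))
          * jacobiP a b (n+1) x
        - (((n:ℝ)+1+a)*((n:ℝ)+1+b)*(2*((n:ℝ)+1)+a+b+2)) * jacobiP a b n x := by
  have h1 := jacobiP_I1 a b (n+1) x
  have h2 := jacobiP_I1 a b n x
  have h3 := jacobiP_M2' a b n x
  rw [show n+1+1 = n+2 from rfl] at h1
  push_cast at h1
  linear_combination (((1-x)/2)*(2*(n:ℝ)+a+b+4)*(2*(n:ℝ)+a+b+2)) * h3
    + (-(((n:ℝ)+a+b+2)*(2*(n:ℝ)+a+b+2))) * h1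
    + (((n:ℝ)+1+b)*(2*(n:ℝ)+a+b+4)) * h2

lemma jacobiP_differentiable (a b : ℝ) (n : ℕ) : Differentiable ℝ (jacobiP a b n) := by
  have h : jacobiP a b n = fun x => ∑ m ∈ Finset.range (n + 1),
      genBinom ((n : ℝ) + a) (n - m) * genBinom ((n : ℝ) + b) m *
      ((x - 1) / 2) ^ m * ((x + 1) / 2) ^ (n - m) := rfl
  rw [h]
  apply Differentiable.fun_sum
  intro i _
  fun_prop

lemma jacobiP_continuous (a b : ℝ) (n : ℕ) : Continuous (jacobiP a b n) :=
  (jacobiP_differentiable a b n).continuous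

lemma jacobiP_wronskian_pos (a b : ℝ) (ha : -1 < a) (hb : -1 < b) :
    ∀ n : ℕ, ∀ x : ℝ,
      0 < deriv (jacobiP a b (n+1)) x * jacobiP a b n x
          - deriv (jacobiP a b n) x * jacobiP a b (n+1) x := by
  intro n
  induction n with
  | zero =>
    intro x
    have h0 : jacobiP a b 0 = fun _ : ℝ => (1:ℝ) := funext fun y => jacobiP_zero_eq a b y
    have h1 : jacobiP a b 1 = fun y : ℝ => ((2+a+b)/2)*y + ((a+1)/2 - (b+1)/2) := by
      funext y; rw [jacobiP_one_eq]; ring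
    rw [h0, h1]
    have hd : deriv (fun y : ℝ => ((2+a+b)/2)*y + ((a+1)/2 - (b+1)/2)) x = (2+a+b)/2 := by
      have h := (((hasDerivAt_id x).const_mul ((2+a+b)/2)).add_const ((a+1)/2 - (b+1)/2))
      simpa using h.deriv
    rw [hd]
    simp only [deriv_const]
    nlinarith
  | succ n ih =>
    intro x
    have hn : (0:ℝ) ≤ (n:ℝ) := n.cast_nonneg
    have hE : (0:ℝ) < ((n:ℝ)+2)*((n:ℝ)+a+b+2)*(2*((n:ℝ)+1)+a+b) :=
      mul_pos (mul_pos (by linarith) (by linarith)) (by linarith)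
    set E : ℝ := ((n:ℝ)+2)*((n:ℝ)+a+b+2)*(2*((n:ℝ)+1)+a+b) with hEdef
    set F : ℝ := (2*((n:ℝ)+1)+a+b)*(2*((n:ℝ)+1)+a+b+1)*(2*((n:ℝ)+1)+a+b+2) with hFdef
    set Br : ℝ := ((n:ℝ)+a+2)*((n:ℝ)+a+b+2)*(2*((n:ℝ)+1)+a+b)
            + ((n:ℝ)+1)*((n:ℝ)+1+b)*(2*((n:ℝ)+1)+a+b+2) with hBrdef
    set H : ℝ := ((n:ℝ)+1+a)*((n:ℝ)+1+b)*(2*((n:ℝ)+1)+a+b+2) with hHdef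
    have hF : (0:ℝ) < F := by
      rw [hFdef]
      exact mul_pos (mul_pos (by linarith) (by linarith)) (by linarith)
    have hH : (0:ℝ) < H := by
      rw [hHdef]
      exact mul_pos (mul_pos (by linarith) (by linarith)) (by linarith)
    have hrec : jacobiP a b (n+2)
        = fun y => ((F*((y-1)/2) + Br) * jacobiP a b (n+1) y - H * jacobiP a b n y)/E := by
      funext y
      have h := jacobiP_rec a b n y
      rw [← hEdef, ← hFdef, ← hBrdef, ← hHdef] at h
      field_simp
      linear_combination 2 * h
    have hd1 : HasDerivAt (jacobiP a b (n+1)) (deriv (jacobiP a b (n+1)) x) x :=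
      ((jacobiP_differentiable a b (n+1)) x).hasDerivAt
    have hd0 : HasDerivAt (jacobiP a b n) (deriv (jacobiP a b n) x) x :=
      ((jacobiP_differentiable a b n) x).hasDerivAt
    have hlin : HasDerivAt (fun y : ℝ => F*((y-1)/2) + Br) (F/2) x := by
      have h := ((((hasDerivAt_id x).sub_const 1).div_const 2).const_mul F).add_const Br
      convert h using 1 <;> first | rfl | ring
    have hd2 : HasDerivAt (jacobiP a b (n+2))
        ((F/2 * jacobiP a b (n+1) x + (F*((x-1)/2)+Br) * deriv (jacobiP a b (n+1)) x
          - H * deriv (jacobiP a b n) x)/E) x := by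
      rw [hrec]
      exact ((hlin.mul hd1).sub (hd0.const_mul H)).div_const E
    rw [show n+1+1 = n+2 from rfl, hd2.deriv, hrec]
    have key : (F/2 * jacobiP a b (n+1) x + (F*((x-1)/2)+Br) * deriv (jacobiP a b (n+1)) x
          - H * deriv (jacobiP a b n) x)/E * jacobiP a b (n+1) x
        - deriv (jacobiP a b (n+1)) x
            * ((fun y => ((F*((y-1)/2) + Br) * jacobiP a b (n+1) y - H * jacobiP a b n y)/E) x)
        = (F/2 * (jacobiP a b (n+1) x)^2
            + H * (deriv (jacobiP a b (n+1)) x * jacobiP a b n x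
                    - deriv (jacobiP a b n) x * jacobiP a b (n+1) x))/E := by
      field_simp
      ring
    rw [key]
    apply div_pos _ hE
    nlinarith [sq_nonneg (jacobiP a b (n+1) x), ih x]

lemma sign_extend (g : ℝ → ℝ) (hgc : Continuous g) (z : ℝ) (hz1 : z < 1) (hg1 : 0 < g 1)
    (hno : ∀ w, z < w → w < 1 → g w ≠ 0) : ∀ w, z < w → w ≤ 1 → 0 < g w := by
  intro w hw hw1
  rcases eq_or_lt_of_le hw1 with rfl | hlt
  · exact hg1
  · by_contra hle
    push_neg at hle
    have hneg : g w < 0 := lt_of_le_of_ne hle (hno w hw hlt)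
    have h0 : (0:ℝ) ∈ Set.Ioo (g w) (g 1) := ⟨hneg, hg1⟩
    obtain ⟨c, hc, hgc0⟩ := intermediate_value_Ioo (le_of_lt hlt) hgc.continuousOn h0
    exact hno c (lt_trans hw hc.1) hc.2 hgc0

lemma down_step (g h : ℝ → ℝ) (hgd : Differentiable ℝ g)
    (xstar : ℝ) (hxs : xstar < 1) (hg1 : 0 < g 1)
    (hW : ∀ x, 0 < deriv h x * g x - deriv g x * h x)
    (hh : ∀ y, xstar < y → y ≤ 1 → 0 < h y) :
    ∀ y, xstar < y → y ≤ 1 → 0 < g y := by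
  have hgc : Continuous g := hgd.continuous
  by_contra hcon
  push_neg at hcon
  obtain ⟨y, hy1, hy2, hy3⟩ := hcon
  have hylt : y < 1 := lt_of_le_of_ne hy2 (by rintro rfl; linarith)
  set Z : Set ℝ := Set.Icc y 1 ∩ g ⁻¹' {0} with hZ
  have hZne : Z.Nonempty := by
    rcases eq_or_lt_of_le hy3 with h0 | hneg
    · exact ⟨y, ⟨le_refl y, hy2⟩, h0⟩
    · have h0 : (0:ℝ) ∈ Set.Ioo (g y) (g 1) := ⟨hneg, hg1⟩
      obtain ⟨c, hc, hgc0⟩ := intermediate_value_Ioo (le_of_lt hylt) hgc.continuousOn h0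
      exact ⟨c, ⟨le_of_lt hc.1, le_of_lt hc.2⟩, hgc0⟩
  have hZclosed : IsClosed Z := isClosed_Icc.inter (isClosed_singleton.preimage hgc)
  have hZb : Bornology.IsBounded Z := (Metric.isBounded_Icc y 1).subset Set.inter_subset_left
  have hZcpt : IsCompact Z := Metric.isCompact_of_isClosed_isBounded hZclosed hZb
  have hzmem := hZcpt.sSup_mem hZne
  set z := sSup Z with hzdef
  obtain ⟨⟨hzy, hz1'⟩, hz0⟩ := hzmem
  have hz0' : g z = 0 := hz0
  have hzlt1 : z < 1 := lt_of_le_of_ne hz1' (by intro h; rw [h] at hz0'; linarith)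
  have hno : ∀ w, z < w → w < 1 → g w ≠ 0 := by
    intro w hw hw1 hgw
    have hwZ : w ∈ Z := ⟨⟨le_trans hzy (le_of_lt hw), le_of_lt hw1⟩, hgw⟩
    have := le_csSup hZcpt.bddAbove hwZ
    linarith
  have hpos : ∀ w, z < w → w ≤ 1 → 0 < g w := sign_extend g hgc z hzlt1 hg1 hno
  have hd : HasDerivAt g (deriv g z) z := (hgd z).hasDerivAt
  have hdnn : 0 ≤ deriv g z := by
    by_contra hneg
    push_neg at hneg
    have hslope := hasDerivAt_iff_tendsto_slope.mp hd
    have hslope' : Filter.Tendsto (slope g z) (nhdsWithin z (Set.Ioi z)) (nhds (deriv g z)) :=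
      hslope.mono_left (nhdsWithin_mono z (fun w hw => Set.mem_compl_singleton_iff.mpr (ne_of_gt hw)))
    have hev1 : ∀ᶠ w in nhdsWithin z (Set.Ioi z), slope g z w < 0 :=
      hslope'.eventually_lt_const hneg
    have hev2 : Set.Ioo z 1 ∈ nhdsWithin z (Set.Ioi z) :=
      Ioo_mem_nhdsGT_of_mem ⟨le_refl z, hzlt1⟩
    obtain ⟨w, hsw, hw⟩ := (hev1.and (Filter.eventually_mem_set.mpr hev2)).exists
    have hwz : z < w := hw.1
    have hs : (g w - g z)/(w - z) < 0 := by
      have : slope g z w = (g w - g z)/(w - z) := by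
        rw [slope_def_field]
      rw [← this]; exact hsw
    rw [hz0', sub_zero] at hs
    have hgw : 0 < g w := hpos w hwz (le_of_lt hw.2)
    have : 0 < w - z := by linarith
    nlinarith [div_pos hgw this]
  have hWz := hW z
  rw [hz0', mul_zero] at hWz
  have hhz : 0 < h z := hh z (lt_of_lt_of_le hy1 hzy) hz1'
  nlinarith [mul_nonneg hdnn hhz.le]

/-- for `α ≥ 0`, `β > -1`, `k ≥ 2`, and `x* < t < 1` where `x*`
is the largest zero in `(-1,1)` of the Jacobi polynomial `P_{k-1}^{(α+1,β+1)}`,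
the sequence `P̂_0^{(α,β)}(t), P̂_1^{(α,β)}(t), …, P̂_k^{(α,β)}(t)` is strictly
decreasing. -/
theorem jacobi_decreasing_in_degree
    (α β : ℝ) (hα : 0 ≤ α) (hβ : -1 < β) (k : ℕ) (hk : 2 ≤ k)
    (xstar t : ℝ)
    (hx : IsGreatest
      {y | y ∈ Set.Ioo (-1 : ℝ) 1 ∧ jacobiP (α + 1) (β + 1) (k - 1) y = 0} xstar)
    (ht : xstar < t) (ht1 : t < 1) :
    ∀ j, j < k → jacobiPN α β (j + 1) t < jacobiPN α β j t := by
  obtain ⟨⟨hxm, hxz⟩, hub⟩ := hx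
  obtain ⟨K, rfl⟩ : ∃ K, k = K + 1 := ⟨k-1, by omega⟩
  rw [Nat.add_sub_cancel] at hxz hub
  have hxm1 : (-1:ℝ) < xstar := hxm.1
  have hx1 : xstar < 1 := hxm.2
  have ha : (-1:ℝ) < α + 1 := by linarith
  have hb : (-1:ℝ) < β + 1 := by linarith
  -- positivity of the (α+1, β+1) family on (xstar, 1]
  have baseK : ∀ y, xstar < y → y ≤ 1 → 0 < jacobiP (α+1) (β+1) K y := by
    apply sign_extend _ (jacobiP_differentiable (α+1) (β+1) K).continuous _ hx1
    · rw [jacobiP_at_one]; exact genBinom_pos ha K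
    · intro w hw hw1 h0
      have hmem : w ∈ {y | y ∈ Set.Ioo (-1:ℝ) 1 ∧ jacobiP (α+1) (β+1) K y = 0} :=
        ⟨⟨by linarith, hw1⟩, h0⟩
      have := hub hmem
      linarith
  have gpos : ∀ d n, n + d = K → ∀ y, xstar < y → y ≤ 1 → 0 < jacobiP (α+1) (β+1) n y := by
    intro d
    induction d with
    | zero =>
      intro n hn
      have : n = K := by omega
      subst this
      exact baseK
    | succ d ih =>
      intro n hn
      apply down_step (jacobiP (α+1) (β+1) n) (jacobiP (α+1) (β+1) (n+1))
        (jacobiP_differentiable (α+1) (β+1) n) xstar hx1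
      · rw [jacobiP_at_one]; exact genBinom_pos ha n
      · exact fun x => jacobiP_wronskian_pos (α+1) (β+1) ha hb n x
      · exact ih (n+1) (by omega)
  have gpos' : ∀ n, n ≤ K → ∀ y, xstar < y → y ≤ 1 → 0 < jacobiP (α+1) (β+1) n y :=
    fun n hn => gpos (K-n) n (by omega)
  -- positivity of the (α+1, β) family at t
  have Qpos : ∀ j, j ≤ K → 0 < jacobiP (α+1) β j t := by
    intro j hj
    rcases j with _ | j'
    · rw [jacobiP_zero_eq]; norm_num
    · have hM := jacobiP_M2 (α+1) β j' t
      have h1 := gpos' (j'+1) hj t ht (le_of_lt ht1)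
      have h2 := gpos' j' (by omega) t ht (le_of_lt ht1)
      have hj0 : (0:ℝ) ≤ (j':ℝ) := j'.cast_nonneg
      have hc0 : (0:ℝ) < 2*((j':ℝ)+1)+(α+1)+β+1 := by linarith
      have hr : 0 < (2*((j':ℝ)+1)+(α+1)+β+1) * jacobiP (α+1) β (j'+1) t := by
        rw [hM]
        have hc1 : (0:ℝ) < (j':ℝ)+1+(α+1)+β+1 := by linarith
        have hc2 : (0:ℝ) < (j':ℝ)+1+(α+1) := by linarith
        exact add_pos (mul_pos hc1 h1) (mul_pos hc2 h2)
      by_contra hX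
      push_neg at hX
      nlinarith
  -- main inequality
  intro j hj
  have hj0 : (0:ℝ) ≤ (j:ℝ) := j.cast_nonneg
  have hQ := Qpos j (by omega)
  have hdiff : 0 < ((j:ℝ)+α+1) * jacobiP α β j t - ((j:ℝ)+1) * jacobiP α β (j+1) t := by
    rw [jacobiP_I1 α β j t]
    exact mul_pos (mul_pos (by linarith) (by linarith)) hQ
  have hCj : 0 < genBinom ((j:ℝ)+α) j := genBinom_pos (by linarith) j
  have hCj1eq : genBinom (((j+1:ℕ):ℝ)+α) (j+1)
      = (((j:ℝ)+α)+1)/((j:ℝ)+1) * genBinom ((j:ℝ)+α) j := by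
    push_cast
    rw [show (j:ℝ)+1+α = ((j:ℝ)+α)+1 from by ring, genBinom_succ_top]
  have hne1 : ((j:ℝ)+1) ≠ 0 := by positivity
  have hne2 : ((j:ℝ)+α+1) ≠ 0 := by linarith
  have hne3 : genBinom ((j:ℝ)+α) j ≠ 0 := ne_of_gt hCj
  have hkey : jacobiPN α β j t - jacobiPN α β (j+1) t
      = (((j:ℝ)+α+1) * jacobiP α β j t - ((j:ℝ)+1) * jacobiP α β (j+1) t)
        / (((j:ℝ)+α+1) * genBinom ((j:ℝ)+α) j) := by
    unfold jacobiPN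
    rw [hCj1eq]
    field_simp
    
  have := div_pos hdiff (mul_pos (by linarith : (0:ℝ) < (j:ℝ)+α+1) hCj)
  linarith [hkey ▸ this]
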